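/- For a uniformly random binary sequence of length n with exactly n1 ones (n1 ≥ 2) and τ drawn uniformly from I_1(X), the probability of success at the selected trial satisfies P(X_t = 1 | τ = t) = ((n−1)/(n−2))·(n1/n − 1/(n−1)) for 2 ≤ t ≤ n−1, and P(X_n = 1 | τ = n) = n1/n. -/

import Mathlib

open Finset

/-- Probability weight of a Bernoulli(p) binary sequence. -/
def wgt {n : ℕ} (p : ℝ) (x : Fin n → Bool) : ℝ :=
  ∏ i, if x i then p else 1 - p

/-- The set of trials that immediately follow `k` consecutive successes. -/
def streakSet {n : ℕ} (k : ℕ) (x : Fin n → Bool) : Finset (Fin n) :=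
  Finset.univ.filter (fun i : Fin n =>
    k ≤ i.val ∧ ∀ j : Fin n, i.val - k ≤ j.val → j.val < i.val → x j = true)

/-- The proportion of successes on the trials that immediately follow `k`
consecutive successes. -/
noncomputable def phat {n : ℕ} (k : ℕ) (x : Fin n → Bool) : ℝ :=
  (∑ i ∈ streakSet k x, if x i then (1:ℝ) else 0) / ((streakSet k x).card : ℝ)

/-- Number of successes in the sequence. -/
def ones {n : ℕ} (x : Fin n → Bool) : ℕ :=
  (Finset.univ.filter (fun i => x i = true)).card


section Aux

variable {n : ℕ}

lemma mem_streak_iff (x : Fin n → Bool) (t : Fin n) (ht : 1 ≤ t.val) :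
    t ∈ streakSet 1 x ↔ x ⟨t.val - 1, by omega⟩ = true := by
  simp only [streakSet, mem_filter, mem_univ, true_and]
  constructor
  · rintro ⟨-, h⟩; exact h ⟨t.val - 1, by omega⟩ (by simp) (by simp; omega)
  · intro h
    refine ⟨ht, fun j h1 h2 => ?_⟩
    have : j = ⟨t.val - 1, by omega⟩ := by apply Fin.ext; simp; omega
    rw [this]; exact h

lemma ones_transport (s : Finset (Fin n)) : ones (fun i => decide (i ∈ s)) = s.card := by
  unfold ones; congr 1; ext i; simp

lemma streak_card (hn : 1 ≤ n) (x : Fin n → Bool) :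
    (streakSet 1 x).card = ones x - (if x ⟨n-1, by omega⟩ then 1 else 0) := by
  classical
  have hs : streakSet 1 x =
      (Finset.univ.filter (fun j : Fin n => x j = true ∧ j.val < n - 1)).image
        (fun j => ⟨(j.val + 1) % n, Nat.mod_lt _ (by omega)⟩) := by
    ext i
    simp only [mem_image, mem_filter, mem_univ, true_and]
    constructor
    · intro hi
      have h1 : 1 ≤ i.val := (mem_filter.1 hi).2.1
      have h2 := (mem_streak_iff x i h1).1 hi
      have hi2 : i.val < n := i.isLt
      refine ⟨⟨i.val - 1, by omega⟩, ⟨h2, by simp; omega⟩, ?_⟩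
      apply Fin.ext
      have he : i.val - 1 + 1 = i.val := by omega
      simp [he, Nat.mod_eq_of_lt hi2]
    · rintro ⟨j, ⟨hxj, hjlt⟩, rfl⟩
      have hm : (j.val + 1) % n = j.val + 1 := Nat.mod_eq_of_lt (by omega)
      rw [mem_streak_iff _ _ (by simp [hm])]
      convert hxj using 2
      apply Fin.ext; simp [hm]
  rw [hs, card_image_of_injOn (fun a ha b hb hab => by
    simp only [mem_coe, mem_filter] at ha hb
    have ha2 : (a.val + 1) % n = a.val + 1 := Nat.mod_eq_of_lt (by omega)
    have hb2 : (b.val + 1) % n = b.val + 1 := Nat.mod_eq_of_lt (by omega)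
    apply Fin.ext
    have := congrArg Fin.val hab
    simp only [ha2, hb2] at this
    omega)]
  have hsplit : Finset.univ.filter (fun i : Fin n => x i = true)
      = (Finset.univ.filter (fun j : Fin n => x j = true ∧ j.val < n - 1)) ∪
        (Finset.univ.filter (fun j : Fin n => x j = true ∧ j.val = n - 1)) := by
    ext i
    simp only [mem_filter, mem_univ, true_and, mem_union]
    have := i.isLt
    constructor
    · intro h
      by_cases hc : i.val < n - 1
      · exact Or.inl ⟨h, hc⟩
      · exact Or.inr ⟨h, by omega⟩
    · rintro (⟨h, -⟩ | ⟨h, -⟩) <;> exact h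
  have hdisj : Disjoint
      (Finset.univ.filter (fun j : Fin n => x j = true ∧ j.val < n - 1))
      (Finset.univ.filter (fun j : Fin n => x j = true ∧ j.val = n - 1)) := by
    rw [disjoint_left]
    intro a ha hb
    simp only [mem_filter] at ha hb
    omega
  have hlast : (Finset.univ.filter (fun j : Fin n => x j = true ∧ j.val = n - 1)).card
      = (if x ⟨n-1, by omega⟩ then 1 else 0) := by
    by_cases hx : x ⟨n-1, by omega⟩ = true
    · rw [if_pos hx]
      have : (Finset.univ.filter (fun j : Fin n => x j = true ∧ j.val = n - 1))
          = {⟨n-1, by omega⟩} := by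
        ext j
        simp only [mem_filter, mem_univ, true_and, mem_singleton]
        constructor
        · rintro ⟨-, h⟩; exact Fin.ext h
        · intro h; rw [h]; exact ⟨hx, rfl⟩
      rw [this, card_singleton]
    · rw [if_neg (by simpa using hx)]
      rw [Finset.card_eq_zero]
      ext j
      simp only [mem_filter, mem_univ, true_and, notMem_empty, iff_false, not_and]
      intro hj hjv
      have hj2 : j = (⟨n-1, by omega⟩ : Fin n) := by apply Fin.ext; simpa using hjv
      exact hx (hj2 ▸ hj)
  unfold ones
  rw [hsplit, card_union_of_disjoint hdisj, hlast]
  omega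

lemma countL (n1 : ℕ) (A B : Finset (Fin n)) (hd : Disjoint A B) (hA : A.card ≤ n1) :
    (Finset.univ.filter (fun s : Finset (Fin n) =>
        s.card = n1 ∧ A ⊆ s ∧ Disjoint B s)).card
      = (n - A.card - B.card).choose (n1 - A.card) := by
  classical
  have key : (Finset.univ.filter (fun s : Finset (Fin n) =>
        s.card = n1 ∧ A ⊆ s ∧ Disjoint B s)).card
      = (Finset.powersetCard (n1 - A.card) ((Finset.univ \ A) \ B)).card := by
    apply Finset.card_bij' (fun s _ => s \ A) (fun s' _ => s' ∪ A)
    · intro s hs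
      simp only [mem_filter, mem_univ, true_and] at hs
      obtain ⟨hc, hsub, hdisj⟩ := hs
      rw [Finset.mem_powersetCard]
      constructor
      · intro a ha
        simp only [mem_sdiff] at ha ⊢
        refine ⟨⟨mem_univ a, ha.2⟩, ?_⟩
        exact fun hb => (disjoint_left.1 hdisj hb) ha.1
      · rw [Finset.card_sdiff_of_subset hsub, hc]
    · intro s' hs'
      rw [Finset.mem_powersetCard] at hs'
      obtain ⟨hsub, hc⟩ := hs'
      have hdisjA : Disjoint s' A := by
        rw [disjoint_left]
        intro a ha hA'
        have := hsub ha
        simp only [mem_sdiff] at this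
        exact this.1.2 hA'
      simp only [mem_filter, mem_univ, true_and]
      refine ⟨?_, ?_, ?_⟩
      · rw [Finset.card_union_of_disjoint hdisjA, hc]
        omega
      · exact Finset.subset_union_right
      · rw [disjoint_left]
        intro b hb hbs
        rcases Finset.mem_union.1 hbs with h | h
        · have := hsub h
          simp only [mem_sdiff] at this
          exact this.2 hb
        · exact (disjoint_right.1 hd hb) h
    · intro s hs
      simp only [mem_filter, mem_univ, true_and] at hs
      exact Finset.sdiff_union_of_subset hs.2.1
    · intro s' hs'
      rw [Finset.mem_powersetCard] at hs'
      have hdisjA : Disjoint s' A := by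
        rw [disjoint_left]
        intro a ha hA'
        have := hs'.1 ha
        simp only [mem_sdiff] at this
        exact this.1.2 hA'
      exact Finset.union_sdiff_cancel_right hdisjA
  rw [key, Finset.card_powersetCard]
  congr 1
  rw [Finset.card_sdiff_of_subset, Finset.card_sdiff_of_subset]
  · simp
  · exact Finset.subset_univ A
  · intro b hb
    simp only [mem_sdiff]
    exact ⟨mem_univ b, fun hA' => (disjoint_left.1 hd hA') hb⟩

lemma sum_transport (n1 : ℕ) (h1 : 2 ≤ n1) (hn : 2 < n) (L : Fin n) (hLval : L.val = n - 1)
    (P : (Fin n → Bool) → Prop) [DecidablePred P] (Q : Finset (Fin n) → Prop) [DecidablePred Q]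
    (hPQ : ∀ s : Finset (Fin n), P (fun i => decide (i ∈ s)) ↔ Q s) :
    ∑ x : Fin n → Bool, (if ones x = n1 ∧ P x then (1:ℝ)/((streakSet 1 x).card : ℝ) else 0)
    = ((Finset.univ.filter (fun s : Finset (Fin n) =>
          s.card = n1 ∧ Q s ∧ L ∈ s)).card : ℝ) * (1/((n1:ℝ)-1))
    + ((Finset.univ.filter (fun s : Finset (Fin n) =>
          s.card = n1 ∧ Q s ∧ L ∉ s)).card : ℝ) * (1/(n1:ℝ)) := by
  classical
  have hLmk : L = (⟨n - 1, by omega⟩ : Fin n) := Fin.ext hLval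
  have step1 : ∑ x : Fin n → Bool, (if ones x = n1 ∧ P x then (1:ℝ)/((streakSet 1 x).card : ℝ) else 0)
      = ∑ s : Finset (Fin n),
          ((if s.card = n1 ∧ Q s ∧ L ∈ s then (1:ℝ)/((n1:ℝ)-1) else 0)
           + (if s.card = n1 ∧ Q s ∧ L ∉ s then (1:ℝ)/(n1:ℝ) else 0)) := by
    have hbij : Function.Bijective (fun s : Finset (Fin n) => fun i => decide (i ∈ s)) := by
      constructor
      · intro s s' h
        ext i
        have := congrFun h i
        simpa using this
      · intro x
        exact ⟨Finset.univ.filter (fun i => x i = true), by funext i; simp⟩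
    refine (Fintype.sum_equiv (Equiv.ofBijective _ hbij) _ _ (fun s => (?_ : _ = _).symm)).symm
    · show (if ones (fun i => decide (i ∈ s)) = n1 ∧ P (fun i => decide (i ∈ s)) then
        (1:ℝ)/((streakSet 1 (fun i => decide (i ∈ s))).card : ℝ) else 0) = _
      have hones := ones_transport s
      have hstreak := streak_card (by omega : 1 ≤ n) (fun i => decide (i ∈ s))
      have hcond : (ones (fun i => decide (i ∈ s)) = n1 ∧ P (fun i => decide (i ∈ s)))
          ↔ (s.card = n1 ∧ Q s) := by
        rw [hones, hPQ s]
      by_cases h : s.card = n1 ∧ Q s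
      · rw [if_pos (hcond.mpr h)]
        by_cases hLs : L ∈ s
        · rw [if_pos ⟨h.1, h.2, hLs⟩, if_neg (fun hx => hx.2.2 hLs), add_zero]
          rw [hstreak, hones, h.1, if_pos (show decide ((⟨n-1, by omega⟩ : Fin n) ∈ s) = true by
            simp only [← hLmk]; simpa using hLs), Nat.cast_sub (by omega)]
          norm_num
        · rw [if_neg (fun hx => hLs hx.2.2), if_pos ⟨h.1, h.2, hLs⟩, zero_add]
          rw [hstreak, hones, h.1, if_neg (show ¬ decide ((⟨n-1, by omega⟩ : Fin n) ∈ s) = true by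
            simp only [← hLmk]; simpa using hLs)]
          norm_num
      · rw [if_neg (fun hx => h ⟨hones ▸ hx.1, (hPQ s).1 hx.2⟩),
          if_neg (by tauto), if_neg (by tauto), add_zero]
  rw [step1, Finset.sum_add_distrib]
  rw [← Finset.sum_filter, ← Finset.sum_filter, Finset.sum_const, Finset.sum_const,
    nsmul_eq_mul, nsmul_eq_mul]

end Aux

section Counts

variable {n : ℕ}

lemma count_pair (n1 : ℕ) (h1 : 2 ≤ n1) (u v : Fin n) (huv : u ≠ v) :
    (Finset.univ.filter (fun s : Finset (Fin n) => s.card = n1 ∧ u ∈ s ∧ v ∈ s)).card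
      = (n-2).choose (n1-2) := by
  classical
  have h2 : ({u, v} : Finset (Fin n)).card = 2 := by
    rw [card_insert_of_notMem (by simp [huv]), card_singleton]
  have hc := countL n1 {u, v} ∅ (disjoint_empty_right _) (by rw [h2]; exact h1)
  rw [h2, card_empty, Nat.sub_zero] at hc
  rw [← hc]
  exact congrArg Finset.card (filter_congr (fun s _ => by
    simp [insert_subset_iff, and_assoc]))

lemma count_pair_not (n1 : ℕ) (h1 : 1 ≤ n1) (u v : Fin n) (huv : u ≠ v) :
    (Finset.univ.filter (fun s : Finset (Fin n) => s.card = n1 ∧ u ∈ s ∧ v ∉ s)).card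
      = (n-2).choose (n1-1) := by
  classical
  have hc := countL n1 {u} {v} (by simp [huv]) (by simpa using h1)
  rw [card_singleton, card_singleton] at hc
  rw [show n - 1 - 1 = n - 2 by omega] at hc
  rw [← hc]
  exact congrArg Finset.card (filter_congr (fun s _ => by
    simp [Finset.disjoint_singleton_left]))

lemma count_triple (n1 : ℕ) (h1 : 3 ≤ n1) (u v w : Fin n)
    (huv : u ≠ v) (huw : u ≠ w) (hvw : v ≠ w) :
    (Finset.univ.filter (fun s : Finset (Fin n) =>
        s.card = n1 ∧ (u ∈ s ∧ v ∈ s) ∧ w ∈ s)).card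
      = (n-3).choose (n1-3) := by
  classical
  have h3 : ({u, v, w} : Finset (Fin n)).card = 3 := by
    rw [card_insert_of_notMem (by simp [huv, huw]),
      card_insert_of_notMem (by simp [hvw]), card_singleton]
  have hc := countL n1 {u, v, w} ∅ (disjoint_empty_right _) (by rw [h3]; exact h1)
  rw [h3, card_empty, Nat.sub_zero] at hc
  rw [← hc]
  refine congrArg Finset.card (filter_congr (fun s _ => ?_))
  simp only [insert_subset_iff, Finset.singleton_subset_iff, Finset.disjoint_empty_left]
  tauto

lemma count_triple_zero (u v w : Fin n)
    (huv : u ≠ v) (huw : u ≠ w) (hvw : v ≠ w) :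
    (Finset.univ.filter (fun s : Finset (Fin n) =>
        s.card = 2 ∧ (u ∈ s ∧ v ∈ s) ∧ w ∈ s)).card = 0 := by
  classical
  rw [Finset.card_eq_zero, Finset.filter_eq_empty_iff]
  rintro s - ⟨hc, ⟨hu, hv⟩, hw⟩
  have hsub : ({u, v, w} : Finset (Fin n)) ⊆ s := by
    intro x hx
    simp only [Finset.mem_insert, Finset.mem_singleton] at hx
    rcases hx with rfl | rfl | rfl <;> assumption
  have h3 : ({u, v, w} : Finset (Fin n)).card = 3 := by
    rw [card_insert_of_notMem (by simp [huv, huw]),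
      card_insert_of_notMem (by simp [hvw]), card_singleton]
  have := Finset.card_le_card hsub
  omega

lemma count_pair_pair_not (n1 : ℕ) (h1 : 2 ≤ n1) (u v w : Fin n)
    (huv : u ≠ v) (huw : u ≠ w) (hvw : v ≠ w) :
    (Finset.univ.filter (fun s : Finset (Fin n) =>
        s.card = n1 ∧ (u ∈ s ∧ v ∈ s) ∧ w ∉ s)).card
      = (n-3).choose (n1-2) := by
  classical
  have h2 : ({u, v} : Finset (Fin n)).card = 2 := by
    rw [card_insert_of_notMem (by simp [huv]), card_singleton]
  have hc := countL n1 {u, v} {w} (by simp [huw.symm, hvw.symm]) (by rw [h2]; exact h1)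
  rw [h2, card_singleton] at hc
  rw [show n - 2 - 1 = n - 3 by omega] at hc
  rw [← hc]
  refine congrArg Finset.card (filter_congr (fun s _ => ?_))
  constructor
  · rintro ⟨h1', ⟨h2', h3'⟩, h4'⟩
    exact ⟨h1', by simp [insert_subset_iff, h2', h3'], by simp [Finset.disjoint_singleton_left, h4']⟩
  · rintro ⟨h1', hsub, hdisj⟩
    simp only [insert_subset_iff, Finset.singleton_subset_iff] at hsub
    simp only [Finset.disjoint_singleton_left] at hdisj
    exact ⟨h1', ⟨hsub.1, hsub.2⟩, hdisj⟩

lemma count_term_zero (n1 : ℕ) (u v : Fin n) :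
    (Finset.univ.filter (fun s : Finset (Fin n) =>
        s.card = n1 ∧ (u ∈ s ∧ v ∈ s) ∧ v ∉ s)).card = 0 := by
  classical
  rw [Finset.card_eq_zero, Finset.filter_eq_empty_iff]
  rintro s - ⟨-, ⟨-, hv⟩, hv'⟩
  exact hv' hv

end Counts

lemma count_pair_dup {n : ℕ} (n1 : ℕ) (h1 : 2 ≤ n1) (u v : Fin n) (huv : u ≠ v) :
    (Finset.univ.filter (fun s : Finset (Fin n) =>
        s.card = n1 ∧ (u ∈ s ∧ v ∈ s) ∧ v ∈ s)).card = (n-2).choose (n1-2) := by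
  classical
  rw [← count_pair n1 h1 u v huv]
  exact congrArg Finset.card (filter_congr (fun s _ => by tauto))

section Arith

lemma cast_id1 (m k : ℕ) (hk : k ≤ m + 1) :
    ((m+1).choose (k+1) : ℝ) * ((k:ℝ)+1) = ((m+1).choose k : ℝ) * ((m:ℝ)+1-(k:ℝ)) := by
  have h := Nat.choose_succ_right_eq (m+1) k
  have h2 := congrArg (Nat.cast : ℕ → ℝ) h
  rw [Nat.cast_mul, Nat.cast_mul, Nat.cast_sub (by omega)] at h2
  push_cast at h2
  linarith [h2]

lemma cast_id2 (m j : ℕ) (hj : j ≤ m) :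
    (m.choose (j+2) : ℝ) * ((j:ℝ)+2) = (m.choose (j+1) : ℝ) * ((m:ℝ)-(j:ℝ)-1) := by
  rcases eq_or_lt_of_le hj with rfl | hlt
  · rw [Nat.choose_eq_zero_of_lt (by omega), Nat.choose_eq_zero_of_lt (by omega)]
    push_cast
    ring
  · have h := Nat.choose_succ_right_eq m (j+1)
    have h2 := congrArg (Nat.cast : ℕ → ℝ) h
    rw [Nat.cast_mul, Nat.cast_mul, Nat.cast_sub (by omega)] at h2
    push_cast at h2
    linarith [h2]

lemma cast_id3 (m j : ℕ) (hj : j ≤ m) :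
    (m.choose (j+1) : ℝ) * ((j:ℝ)+1) = (m.choose j : ℝ) * ((m:ℝ)-(j:ℝ)) := by
  have h := Nat.choose_succ_right_eq m j
  have h2 := congrArg (Nat.cast : ℕ → ℝ) h
  rw [Nat.cast_mul, Nat.cast_mul, Nat.cast_sub (by omega)] at h2
  push_cast at h2
  linarith [h2]

lemma ratio_term (A B mr kr : ℝ) (hA : 0 < A) (hB : 0 ≤ B) (hk : 0 ≤ kr)
    (hkm : kr ≤ mr + 1)
    (hI : B * (kr+1) = A * (mr+1-kr)) :
    (A * (1/(kr+1)) + 0 * (1/(kr+2))) / (A * (1/(kr+1)) + B * (1/(kr+2)))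
      = (kr+2)/(mr+3) := by
  have h1 : (0:ℝ) < kr + 1 := by linarith
  have h2 : (0:ℝ) < kr + 2 := by linarith
  have h3 : (0:ℝ) < mr + 3 := by linarith
  have hD : 0 < A * (1/(kr+1)) + B * (1/(kr+2)) := by positivity
  rw [div_eq_div_iff hD.ne' h3.ne']
  field_simp
  linear_combination (-(kr+2)) * hI

lemma ratio_int (A B C mr jr : ℝ) (hA : 0 ≤ A) (hB : 0 ≤ B) (hC : 0 ≤ C)
    (hABpos : 0 < A + B) (hj : 0 ≤ jr) (hjm : jr ≤ mr)
    (h3 : B * (jr+1) = A * (mr - jr))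
    (h4 : C * (jr+2) = B * (mr - jr - 1)) :
    (A * (1/(jr+2)) + B * (1/(jr+3))) /
    ((A+B) * (1/(jr+2)) + (B+C) * (1/(jr+3)))
      = ((mr+2)/(mr+1)) * ((jr+3)/(mr+3) - 1/(mr+2)) := by
  have h1 : (0:ℝ) < jr + 2 := by linarith
  have h2 : (0:ℝ) < jr + 3 := by linarith
  have hm1 : (0:ℝ) < mr + 1 := by linarith
  have hm2 : (0:ℝ) < mr + 2 := by linarith
  have hm3 : (0:ℝ) < mr + 3 := by linarith
  have hD : 0 < (A+B) * (1/(jr+2)) + (B+C) * (1/(jr+3)) := by positivity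
  have hRHS : ((mr+2)/(mr+1)) * ((jr+3)/(mr+3) - 1/(mr+2))
      = ((jr+3)*(mr+2) - (mr+3)) / ((mr+3)*(mr+1)) := by
    field_simp
  rw [hRHS, div_eq_div_iff hD.ne' (by positivity : (0:ℝ) < (mr+3)*(mr+1)).ne']
  field_simp
  linear_combination (-(jr+3)*(mr+2)) * h3 + (-((jr+3)*(mr+2)-(mr+3))) * h4

lemma ratio_int2 (mr : ℝ) (hm : 0 ≤ mr) :
    ((0:ℝ) * (1/(1:ℝ)) + 1 * (1/2)) / ((1:ℝ) * (1/1) + (mr+1) * (1/2))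
      = ((mr+2)/(mr+1)) * ((2)/(mr+3) - 1/(mr+2)) := by
  have hm1 : (0:ℝ) < mr + 1 := by linarith
  have hm2 : (0:ℝ) < mr + 2 := by linarith
  have hm3 : (0:ℝ) < mr + 3 := by linarith
  field_simp
  ring

end Arith

/-- Exact conditional success probabilities at the selected trial, for interior and
terminal positions, for a uniformly random sequence with exactly n1 ones. -/
theorem stmt13 (n n1 : ℕ) (hn : 2 < n) (h1 : 2 ≤ n1) (h2 : n1 ≤ n)
    (t : Fin n) (ht : 1 ≤ t.val) :
    (t.val < n - 1 →
      (∑ x : Fin n → Bool,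
          if ones x = n1 ∧ t ∈ streakSet 1 x ∧ x t = true then
            (1:ℝ) / ((streakSet 1 x).card : ℝ) else 0) /
      (∑ x : Fin n → Bool,
          if ones x = n1 ∧ t ∈ streakSet 1 x then
            (1:ℝ) / ((streakSet 1 x).card : ℝ) else 0)
        = (((n : ℝ) - 1) / ((n : ℝ) - 2)) * ((n1 : ℝ) / n - 1 / ((n : ℝ) - 1))) ∧
    (t.val = n - 1 →
      (∑ x : Fin n → Bool,
          if ones x = n1 ∧ t ∈ streakSet 1 x ∧ x t = true then
            (1:ℝ) / ((streakSet 1 x).card : ℝ) else 0) /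
      (∑ x : Fin n → Bool,
          if ones x = n1 ∧ t ∈ streakSet 1 x then
            (1:ℝ) / ((streakSet 1 x).card : ℝ) else 0)
        = (n1 : ℝ) / n) := by
  classical
  obtain ⟨m, rfl⟩ : ∃ m, n = m + 3 := ⟨n - 3, by omega⟩
  obtain ⟨k, rfl⟩ : ∃ k, n1 = k + 2 := ⟨n1 - 2, by omega⟩
  have hk : k ≤ m + 1 := by omega
  set L : Fin (m+3) := ⟨m+2, by omega⟩ with hLdef
  have hLval : L.val = (m+3) - 1 := rfl
  set a : Fin (m+3) := ⟨t.val - 1, by omega⟩ with hadef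
  have haval : a.val = t.val - 1 := rfl
  have hPQden : ∀ s : Finset (Fin (m+3)),
      (t ∈ streakSet 1 (fun i => decide (i ∈ s))) ↔ a ∈ s := by
    intro s
    rw [mem_streak_iff _ t ht]
    simp only [decide_eq_true_eq]
    exact Iff.rfl
  have hPQnum : ∀ s : Finset (Fin (m+3)),
      (t ∈ streakSet 1 (fun i => decide (i ∈ s)) ∧ (decide (t ∈ s)) = true)
        ↔ (a ∈ s ∧ t ∈ s) := by
    intro s
    rw [mem_streak_iff _ t ht]
    simp only [decide_eq_true_eq]
    exact Iff.rfl
  have hDen := sum_transport (k+2) (by omega) (by omega) L hLval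
    (fun x => t ∈ streakSet 1 x) (fun s => a ∈ s) hPQden
  have hNum := sum_transport (k+2) (by omega) (by omega) L hLval
    (fun x => t ∈ streakSet 1 x ∧ x t = true) (fun s => a ∈ s ∧ t ∈ s) hPQnum
  constructor
  · -- interior case
    intro hti
    have htval : t.val < m + 2 := by omega
    have haL : a ≠ L := by
      intro h
      have := congrArg Fin.val h
      rw [haval, hLval] at this
      omega
    have hat : a ≠ t := by
      intro h
      have := congrArg Fin.val h
      rw [haval] at this
      omega
    have htL : t ≠ L := by
      intro h
      have := congrArg Fin.val h
      rw [hLval] at this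
      omega
    rw [hNum, hDen]
    rw [count_pair (k+2) (by omega) a L haL, count_pair_not (k+2) (by omega) a L haL]
    rw [count_pair_pair_not (k+2) (by omega) a t L hat haL htL]
    rcases Nat.eq_zero_or_pos k with rfl | hkpos
    · -- n1 = 2
      rw [count_triple_zero a t L hat haL htL]
      rw [show (m+3-2).choose (0+2-2) = 1 by simp,
          show (m+3-2).choose (0+2-1) = m+1 by
            rw [show m+3-2 = m+1 by omega, show 0+2-1 = 1 by omega, Nat.choose_one_right],
          show (m+3-3).choose (0+2-2) = 1 by simp]
      have hm1 : (0:ℝ) < (m:ℝ) + 1 := by positivity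
      have hm2 : (0:ℝ) < (m:ℝ) + 2 := by positivity
      have hm3 : (0:ℝ) < (m:ℝ) + 3 := by positivity
      trans (((0:ℝ) * (1/(1:ℝ)) + 1 * (1/2)) / ((1:ℝ) * (1/1) + ((m:ℝ)+1) * (1/2)))
      · push_cast
        ring
      · rw [ratio_int2 (m:ℝ) (by positivity)]
        push_cast
        ring
    · -- n1 = k + 2 ≥ 3
      obtain ⟨j, rfl⟩ : ∃ j, k = j + 1 := ⟨k - 1, by omega⟩
      have hj : j ≤ m := by omega
      rw [count_triple (j+1+2) (by omega) a t L hat haL htL]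
      rw [show (m+3-2).choose (j+1+2-2) = (m+1).choose (j+1) by congr 1 <;> omega,
          show (m+3-2).choose (j+1+2-1) = (m+1).choose (j+2) by congr 1 <;> omega,
          show (m+3-3).choose (j+1+2-3) = m.choose j by congr 1 <;> omega,
          show (m+3-3).choose (j+1+2-2) = m.choose (j+1) by congr 1 <;> omega]
      have hP1 : (((m+1).choose (j+1) : ℕ) : ℝ)
          = ((m.choose j : ℕ) : ℝ) + ((m.choose (j+1) : ℕ) : ℝ) := by
        exact_mod_cast congrArg (Nat.cast : ℕ → ℝ) (Nat.choose_succ_succ m j)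
      have hP2 : (((m+1).choose (j+2) : ℕ) : ℝ)
          = ((m.choose (j+1) : ℕ) : ℝ) + ((m.choose (j+2) : ℕ) : ℝ) := by
        exact_mod_cast congrArg (Nat.cast : ℕ → ℝ) (Nat.choose_succ_succ m (j+1))
      rw [hP1, hP2]
      have hABpos : (0:ℝ) < ((m.choose j : ℕ) : ℝ) + ((m.choose (j+1) : ℕ) : ℝ) := by
        have : 0 < m.choose j := Nat.choose_pos hj
        have h0 : (0:ℝ) < ((m.choose j : ℕ) : ℝ) := by exact_mod_cast this
        have h0' : (0:ℝ) ≤ ((m.choose (j+1) : ℕ) : ℝ) := by positivity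
        linarith
      trans ((((m.choose j : ℕ) : ℝ) * (1/((j:ℝ)+2)) + ((m.choose (j+1) : ℕ) : ℝ) * (1/((j:ℝ)+3))) /
        (( ((m.choose j : ℕ) : ℝ) + ((m.choose (j+1) : ℕ) : ℝ)) * (1/((j:ℝ)+2)) +
         ( ((m.choose (j+1) : ℕ) : ℝ) + ((m.choose (j+2) : ℕ) : ℝ)) * (1/((j:ℝ)+3))))
      · push_cast
        ring
      · rw [ratio_int ((m.choose j : ℕ) : ℝ) ((m.choose (j+1) : ℕ) : ℝ) ((m.choose (j+2) : ℕ) : ℝ)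
          (m:ℝ) (j:ℝ) (by positivity) (by positivity) (by positivity) hABpos (by positivity)
          (by exact_mod_cast hj) (cast_id3 m j hj) (cast_id2 m j hj)]
        push_cast
        ring
  · -- terminal case
    intro htt
    have htL : t = L := by
      apply Fin.ext
      rw [hLval]
      exact htt
    have haL : a ≠ L := by
      intro h
      have := congrArg Fin.val h
      rw [haval, hLval] at this
      omega
    rw [hNum, hDen]
    rw [htL]
    rw [count_pair (k+2) (by omega) a L haL, count_pair_not (k+2) (by omega) a L haL]
    rw [count_pair_dup (k+2) (by omega) a L haL, count_term_zero (k+2) a L]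
    rw [show (m+3-2).choose (k+2-2) = (m+1).choose k by congr 1 <;> omega,
        show (m+3-2).choose (k+2-1) = (m+1).choose (k+1) by congr 1 <;> omega]
    have hApos : (0:ℝ) < (((m+1).choose k : ℕ) : ℝ) := by
      have : 0 < (m+1).choose k := Nat.choose_pos hk
      exact_mod_cast this
    trans (((((m+1).choose k : ℕ) : ℝ) * (1/((k:ℝ)+1)) + 0 * (1/((k:ℝ)+2))) /
      ((((m+1).choose k : ℕ) : ℝ) * (1/((k:ℝ)+1)) + (((m+1).choose (k+1) : ℕ) : ℝ) * (1/((k:ℝ)+2))))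
    · push_cast
      ring
    · rw [ratio_term (((m+1).choose k : ℕ) : ℝ) ((((m+1).choose (k+1) : ℕ)) : ℝ) (m:ℝ) (k:ℝ)
        hApos (by positivity) (by positivity) (by exact_mod_cast hk) (cast_id1 m k hk)]
      push_cast
      ring
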